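/- Let ∥·∥ denote the Frobenius norm normalized so that ∥I∥² = 1 (i.e., ∥A∥² = tr(AAᵀ)/p for p×p matrices), and ⟨A,B⟩ = tr(ABᵀ)/p the corresponding inner product. Let Σ be a fixed symmetric p×p matrix, S a random symmetric p×p matrix with E∥S∥² < ∞, μ = ⟨Σ, I⟩, α² = ∥Σ − μI∥², β² = E∥S − Σ∥², δ² = E∥S − μI∥². Assume E[S] = Σ. Then δ² = α² + β², and the minimizer over nonrandom scalars ρ₁, ρ₂ of E∥ρ₁I + ρ₂S − Σ∥² is attained at ρ₂ = α²/δ², ρ₁ = (β²/δ²)μ, with minimal value α²β²/δ². -/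

import Mathlib

open Matrix MeasureTheory ProbabilityTheory

/-- Normalized Frobenius inner product ⟨A,B⟩ = tr(ABᵀ)/p, so that ⟨I,I⟩ = 1. -/
noncomputable def frobInner {p : ℕ} (A B : Matrix (Fin p) (Fin p) ℝ) : ℝ :=
  (A * Bᵀ).trace / p

/-- Normalized squared Frobenius norm ∥A∥² = tr(AAᵀ)/p. -/
noncomputable def frobNormSq {p : ℕ} (A : Matrix (Fin p) (Fin p) ℝ) : ℝ :=
  frobInner A A


namespace LW
variable {p : ℕ}

lemma frobInner_eq_sum (A B : Matrix (Fin p) (Fin p) ℝ) :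
    frobInner A B = (∑ i, ∑ j, A i j * B i j) / p := by
  simp [frobInner, Matrix.trace, Matrix.mul_apply, Matrix.diag]

lemma frobNormSq_eq_sum (A : Matrix (Fin p) (Fin p) ℝ) :
    frobNormSq A = (∑ i, ∑ j, (A i j)^2) / p := by
  simp [frobNormSq, frobInner_eq_sum, sq]

lemma frobNormSq_add (A B : Matrix (Fin p) (Fin p) ℝ) :
    frobNormSq (A + B) = frobNormSq A + 2 * frobInner A B + frobNormSq B := by
  have h : ∀ i j, (A i j + B i j)^2 = A i j^2 + 2*(A i j * B i j) + B i j^2 :=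
    fun i j => by ring
  simp only [frobNormSq_eq_sum, frobInner_eq_sum, Matrix.add_apply, h,
    Finset.sum_add_distrib, add_div, ← Finset.mul_sum, mul_div_assoc]

lemma frobNormSq_smul (c : ℝ) (A : Matrix (Fin p) (Fin p) ℝ) :
    frobNormSq (c • A) = c^2 * frobNormSq A := by
  simp only [frobNormSq_eq_sum, Matrix.smul_apply, smul_eq_mul, mul_pow, ← Finset.mul_sum,
    mul_div_assoc]

lemma frobInner_smul_right (c : ℝ) (A B : Matrix (Fin p) (Fin p) ℝ) :
    frobInner A (c • B) = c * frobInner A B := by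
  have h : ∀ i j, A i j * (c * B i j) = c * (A i j * B i j) := fun i j => by ring
  simp only [frobInner_eq_sum, Matrix.smul_apply, smul_eq_mul, h, ← Finset.mul_sum,
    mul_div_assoc]

lemma frobNormSq_nonneg (A : Matrix (Fin p) (Fin p) ℝ) : 0 ≤ frobNormSq A := by
  rw [frobNormSq_eq_sum]
  positivity

lemma frobInner_comm (A B : Matrix (Fin p) (Fin p) ℝ) : frobInner A B = frobInner B A := by
  have h : ∀ i j, A i j * B i j = B i j * A i j := fun i j => by ring
  simp only [frobInner_eq_sum, h]

lemma frobInner_smul_left (c : ℝ) (A B : Matrix (Fin p) (Fin p) ℝ) :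
    frobInner (c • A) B = c * frobInner A B := by
  rw [frobInner_comm, frobInner_smul_right, frobInner_comm]

lemma frobInner_one_left (B : Matrix (Fin p) (Fin p) ℝ) : frobInner 1 B = B.trace / p := by
  simp [frobInner, Matrix.trace_transpose]

lemma frobInner_one_right (A : Matrix (Fin p) (Fin p) ℝ) : frobInner A 1 = A.trace / p := by
  simp [frobInner]

lemma frobNormSq_one (hp : 0 < p) : frobNormSq (1 : Matrix (Fin p) (Fin p) ℝ) = 1 := by
  rw [frobNormSq, frobInner_one_left, Matrix.trace_one, Fintype.card_fin]
  field_simp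

lemma frobInner_one_centered (hp : 0 < p) (Sig : Matrix (Fin p) (Fin p) ℝ) :
    frobInner 1 (Sig - frobInner Sig 1 • 1) = 0 := by
  rw [frobInner_one_left, Matrix.trace_sub, Matrix.trace_smul, Matrix.trace_one, Fintype.card_fin,
    frobInner_one_right, smul_eq_mul]
  have hp' : (p : ℝ) ≠ 0 := Nat.cast_ne_zero.mpr hp.ne'
  field_simp
  simp

lemma det_expand (hp : 0 < p) (Sig : Matrix (Fin p) (Fin p) ℝ) (c d : ℝ) :
    frobNormSq (c • (1 : Matrix (Fin p) (Fin p) ℝ) + d • (Sig - frobInner Sig 1 • 1)) =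
      c ^ 2 + d ^ 2 * frobNormSq (Sig - frobInner Sig 1 • 1) := by
  rw [frobNormSq_add, frobNormSq_smul, frobNormSq_smul, frobInner_smul_left,
    frobInner_smul_right, frobInner_one_centered hp, frobNormSq_one hp]
  ring

lemma expect {Ω : Type*} [MeasureSpace Ω] [IsProbabilityMeasure (ℙ : Measure Ω)]
    (Sig : Matrix (Fin p) (Fin p) ℝ) (S : Ω → Matrix (Fin p) (Fin p) ℝ)
    (hSL2 : ∀ i j, MemLp (fun ω => S ω i j) 2 ℙ)
    (hmean : ∀ i j, (∫ ω, S ω i j) = Sig i j)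
    (A : Matrix (Fin p) (Fin p) ℝ) (c : ℝ) :
    (∫ ω, frobNormSq (A + c • (S ω - Sig))) =
      frobNormSq A + c ^ 2 * ∫ ω, frobNormSq (S ω - Sig) := by
  set T : Ω → Matrix (Fin p) (Fin p) ℝ := fun ω => S ω - Sig with hT
  have hT2 : ∀ i j, MemLp (fun ω => T ω i j) 2 ℙ := fun i j => by
    simpa [hT, Matrix.sub_apply, Pi.sub_def] using (hSL2 i j).sub (memLp_const (Sig i j))
  have hTint : ∀ i j, Integrable (fun ω => T ω i j) ℙ := fun i j =>
    (hT2 i j).integrable one_le_two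
  have hTmean : ∀ i j, (∫ ω, T ω i j) = 0 := fun i j => by
    simp only [hT, Matrix.sub_apply]
    rw [integral_sub ((hSL2 i j).integrable one_le_two) (integrable_const _), hmean i j]
    simp
  have hnsq_int : Integrable (fun ω => frobNormSq (T ω)) ℙ := by
    simp only [frobNormSq_eq_sum]
    exact (integrable_finset_sum _ fun i _ => integrable_finset_sum _ fun j _ =>
      (hT2 i j).integrable_sq).div_const _
  have hinner_int : Integrable (fun ω => frobInner A (T ω)) ℙ := by
    simp only [frobInner_eq_sum]
    exact (integrable_finset_sum _ fun i _ => integrable_finset_sum _ fun j _ =>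
      (hTint i j).const_mul _).div_const _
  have hinner_zero : (∫ ω, frobInner A (T ω)) = 0 := by
    simp only [frobInner_eq_sum]
    rw [integral_div, integral_finset_sum _
      (fun i _ => integrable_finset_sum _ fun j _ => (hTint i j).const_mul (A i j))]
    have h : ∀ i, (∫ ω, ∑ j, A i j * T ω i j) = 0 := fun i => by
      rw [integral_finset_sum _ (fun j _ => (hTint i j).const_mul (A i j))]
      simp only [integral_const_mul, hTmean, mul_zero, Finset.sum_const_zero]
    simp [h]
  have hpt : ∀ ω, frobNormSq (A + c • T ω) =
      frobNormSq A + 2 * (c * frobInner A (T ω)) + c ^ 2 * frobNormSq (T ω) := fun ω => by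
    rw [frobNormSq_add, frobInner_smul_right, frobNormSq_smul]
  show (∫ ω, frobNormSq (A + c • T ω)) = frobNormSq A + c ^ 2 * ∫ ω, frobNormSq (T ω)
  simp only [hpt]
  have h1 : Integrable (fun ω => frobNormSq A + 2 * (c * frobInner A (T ω))) ℙ :=
    (integrable_const _).add ((hinner_int.const_mul _).const_mul _)
  have h2 : Integrable (fun ω => c ^ 2 * frobNormSq (T ω)) ℙ := hnsq_int.const_mul _
  have h3 : Integrable (fun ω => 2 * (c * frobInner A (T ω))) ℙ :=
    (hinner_int.const_mul _).const_mul _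
  rw [integral_add h1 h2, integral_add (integrable_const _) h3, integral_const,
    integral_const_mul, integral_const_mul, integral_const_mul, hinner_zero]
  simp

end LW

set_option maxHeartbeats 2000000 in
/-- Ledoit–Wolf optimal linear shrinkage: with μ = ⟨Σ,I⟩, α² = ∥Σ−μI∥², β² = E∥S−Σ∥²,
δ² = E∥S−μI∥², one has δ² = α² + β², and E∥ρ₁I + ρ₂S − Σ∥² is minimized at
ρ₂ = α²/δ², ρ₁ = (β²/δ²)μ with minimal value α²β²/δ². -/
theorem ledoit_wolf_optimal_shrinkage
    {Ω : Type*} [MeasureSpace Ω] [IsProbabilityMeasure (ℙ : Measure Ω)]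
    {p : ℕ} (hp : 0 < p) (Sig : Matrix (Fin p) (Fin p) ℝ) (hSig : Sig.IsSymm)
    (S : Ω → Matrix (Fin p) (Fin p) ℝ) (hSsymm : ∀ ω, (S ω).IsSymm)
    (hSL2 : ∀ i j, MemLp (fun ω => S ω i j) 2 ℙ)
    (hmean : ∀ i j, (∫ ω, S ω i j) = Sig i j) :
    let μ : ℝ := frobInner Sig 1
    let α2 : ℝ := frobNormSq (Sig - μ • 1)
    let β2 : ℝ := ∫ ω, frobNormSq (S ω - Sig)
    let δ2 : ℝ := ∫ ω, frobNormSq (S ω - μ • 1)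
    δ2 ≠ 0 →
    (δ2 = α2 + β2 ∧
     (∀ ρ₁ ρ₂ : ℝ,
        α2 * β2 / δ2 ≤ ∫ ω, frobNormSq (ρ₁ • 1 + ρ₂ • S ω - Sig)) ∧
     (∫ ω, frobNormSq ((β2 / δ2 * μ) • 1 + (α2 / δ2) • S ω - Sig)) = α2 * β2 / δ2) := by
  intro μ α2 β2 δ2
  have hμ : μ = frobInner Sig 1 := rfl
  have hα2 : α2 = frobNormSq (Sig - μ • 1) := rfl
  have hβ2 : β2 = ∫ ω, frobNormSq (S ω - Sig) := rfl
  have hδ2 : δ2 = ∫ ω, frobNormSq (S ω - μ • 1) := rfl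
  clear_value μ α2 β2 δ2
  intro hδ
  have hα : 0 ≤ α2 := hα2 ▸ LW.frobNormSq_nonneg _
  have hβ : 0 ≤ β2 := hβ2 ▸ integral_nonneg fun ω => LW.frobNormSq_nonneg _
  have hdet : ∀ c d : ℝ,
      frobNormSq (c • (1 : Matrix (Fin p) (Fin p) ℝ) + d • (Sig - μ • 1)) =
        c ^ 2 + d ^ 2 * α2 := by
    intro c d
    rw [hα2, hμ]
    exact LW.det_expand hp Sig c d
  have key : ∀ ρ₁ ρ₂ : ℝ,
      (∫ ω, frobNormSq (ρ₁ • 1 + ρ₂ • S ω - Sig)) =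
        (ρ₁ + (ρ₂ - 1) * μ) ^ 2 + (ρ₂ - 1) ^ 2 * α2 + ρ₂ ^ 2 * β2 := by
    intro ρ₁ ρ₂
    have harr : ∀ ω, ρ₁ • (1 : Matrix (Fin p) (Fin p) ℝ) + ρ₂ • S ω - Sig =
        ((ρ₁ + (ρ₂ - 1) * μ) • 1 + (ρ₂ - 1) • (Sig - μ • 1)) + ρ₂ • (S ω - Sig) :=
      fun ω => by module
    simp only [harr]
    rw [LW.expect Sig S hSL2 hmean _ ρ₂, hdet, hβ2]
  have hδeq : δ2 = α2 + β2 := by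
    have harr : ∀ ω : Ω, S ω - μ • (1 : Matrix (Fin p) (Fin p) ℝ) =
        (Sig - μ • 1) + (1 : ℝ) • (S ω - Sig) := fun ω => by module
    rw [hδ2, hα2, hβ2]
    simp only [harr]
    rw [LW.expect Sig S hSL2 hmean (Sig - μ • 1) 1]
    ring
  have hδpos : 0 < δ2 := lt_of_le_of_ne (by rw [hδeq]; positivity) (Ne.symm hδ)
  refine ⟨hδeq, ?_, ?_⟩
  · intro ρ₁ ρ₂
    rw [key, hδeq, div_le_iff₀ (by linarith [hδeq ▸ hδpos] : (0:ℝ) < α2 + β2)]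
    nlinarith [sq_nonneg ((1 - ρ₂) * α2 - ρ₂ * β2),
      mul_nonneg (sq_nonneg (ρ₁ + (ρ₂ - 1) * μ)) (by linarith [hδeq ▸ hδpos] : (0:ℝ) ≤ α2 + β2)]
  · have h0 : α2 + β2 ≠ 0 := hδeq ▸ hδ
    rw [key, hδeq]
    field_simp
    ring
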